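/- arXiv:2511.05192 — 2 statements merged into one kernel-verified Lean document; each statement's English description precedes it below -/
import Mathlib

section
/- Let K be a field containing all roots of unity, and let L be the extension of K generated by all elements a of a fixed algebraic closure satisfying a^N ∈ K for some N ≥ 1. Then L/K is an abelian (Galois) extension, and conversely every finite abelian extension of K is contained in L. -/
set_option maxHeartbeats 1000000

open IntermediateField

/-- If `x ^ N` lies in the base field, any `K`-automorphism multiplies `x` by (the image of)
an element of `K`. -/
private lemma aux_root_mul (K : Type*) [Field K] {M : Type*} [Field M] [Algebra K M]
    (hroots : ∀ n : ℕ, 0 < n → ∃ ζ : K, IsPrimitiveRoot ζ n)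
    (σ : M ≃ₐ[K] M) (x : M) (N : ℕ) (hN : 1 ≤ N) (c : K)
    (hx : x ^ N = algebraMap K M c) : ∃ u : K, σ x = algebraMap K M u * x := by
  rcases eq_or_ne x 0 with rfl | hx0
  · exact ⟨1, by simp⟩
  obtain ⟨ζ, hζ⟩ := hroots N hN
  have hζ' : IsPrimitiveRoot (algebraMap K M ζ) N :=
    hζ.map_of_injective (algebraMap K M).injective
  have hxN : x ^ N ≠ 0 := pow_ne_zero _ hx0
  have h1 : (σ x * x⁻¹) ^ N = 1 := by
    rw [mul_pow, inv_pow, ← map_pow, hx, AlgEquiv.commutes, ← hx]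
    field_simp
  haveI : NeZero N := ⟨by omega⟩
  obtain ⟨i, _, hi⟩ := hζ'.eq_pow_of_pow_eq_one h1
  refine ⟨ζ ^ i, ?_⟩
  rw [map_pow, hi]
  field_simp

/-- Let `K` be a field of characteristic `0` containing all roots of unity, and inside a
fixed algebraic closure `Ω` of `K` let `L` be the extension of `K` generated by all
elements `a` with `a ^ N ∈ K` for some `N ≥ 1`.  Then `L/K` is an abelian Galois
extension, and conversely every finite abelian (Galois) extension of `K` inside `Ω`
is contained in `L`. -/
theorem radical_closure_is_maximal_abelian_extension
    (K : Type*) [Field K] [CharZero K]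
    (hroots : ∀ n : ℕ, 0 < n → ∃ ζ : K, IsPrimitiveRoot ζ n) :
    letI Ω := AlgebraicClosure K
    letI L : IntermediateField K Ω :=
      IntermediateField.adjoin K
        {a : Ω | ∃ N : ℕ, 1 ≤ N ∧ a ^ N ∈ (⊥ : IntermediateField K Ω)}
    (IsGalois K ↥L ∧ (∀ σ τ : ↥L ≃ₐ[K] ↥L, σ * τ = τ * σ)) ∧
    (∀ F : IntermediateField K Ω, FiniteDimensional K ↥F → IsGalois K ↥F →
      (∀ σ τ : ↥F ≃ₐ[K] ↥F, σ * τ = τ * σ) → F ≤ L) := by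
  set Ω := AlgebraicClosure K with hΩ
  set S : Set Ω := {a : Ω | ∃ N : ℕ, 1 ≤ N ∧ a ^ N ∈ (⊥ : IntermediateField K Ω)} with hSdef
  set L : IntermediateField K Ω := IntermediateField.adjoin K S with hLdef
  constructor
  · -- L/K is abelian Galois
    constructor
    · -- Galois
      have hnormal : Normal K ↥L := by
        rw [IntermediateField.normal_iff_forall_map_le']
        intro σ
        rw [hLdef, IntermediateField.adjoin_map]
        apply IntermediateField.adjoin.mono
        rintro _ ⟨a, ⟨N, hN, hmem⟩, rfl⟩
        rw [IntermediateField.mem_bot] at hmem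
        obtain ⟨c, hc⟩ := hmem
        refine ⟨N, hN, ?_⟩
        rw [IntermediateField.mem_bot]
        exact ⟨c, by rw [← map_pow, ← hc]; exact (σ.commutes c).symm⟩
      exact { to_isSeparable := inferInstance, to_normal := hnormal }
    · -- abelian
      intro σ τ
      have key : ∀ x : ↥L, (∃ N : ℕ, 1 ≤ N ∧ ∃ c : K, x ^ N = algebraMap K ↥L c) →
          σ (τ x) = τ (σ x) := by
        rintro x ⟨N, hN, c, hc⟩
        obtain ⟨u, hu⟩ := aux_root_mul K hroots σ x N hN c hc
        obtain ⟨w, hw⟩ := aux_root_mul K hroots τ x N hN c hc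
        rw [hw, hu, map_mul, map_mul, AlgEquiv.commutes, AlgEquiv.commutes, hu, hw]
        ring
      have : (σ * τ).toAlgHom = (τ * σ).toAlgHom := by
        apply IntermediateField.adjoin_algHom_ext
        rintro a ⟨N, hN, hmem⟩
        rw [IntermediateField.mem_bot] at hmem
        obtain ⟨c, hc⟩ := hmem
        have hx : (⟨a, IntermediateField.subset_adjoin K S ⟨N, hN, by
            rw [IntermediateField.mem_bot]; exact ⟨c, hc⟩⟩⟩ : ↥L) ^ N
            = algebraMap K ↥L c := by
          apply Subtype.ext
          push_cast
          exact hc.symm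
        exact key _ ⟨N, hN, c, hx⟩
      exact AlgEquiv.ext fun z => congrArg (fun f => f z) this
  · -- every finite abelian extension is contained in L
    intro F _ _ hcomm
    letI : CommGroup (↥F ≃ₐ[K] ↥F) :=
      { (inferInstance : Group (↥F ≃ₐ[K] ↥F)) with mul_comm := hcomm }
    haveI : HasEnoughRootsOfUnity K (Monoid.exponent (↥F ≃ₐ[K] ↥F)) :=
      ⟨hroots _ (Nat.pos_of_ne_zero Monoid.exponent_ne_zero_of_finite), inferInstance⟩
    -- the intersection of all kernels of characters is trivial
    have hinf : (⨅ H ∈ {H : Subgroup (↥F ≃ₐ[K] ↥F) | IsCyclic ((↥F ≃ₐ[K] ↥F) ⧸ H)}, H)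
        = ⊥ := by
      rw [eq_bot_iff]
      intro σ hσ
      rw [Subgroup.mem_bot]
      by_contra hne
      obtain ⟨φ, hφ⟩ :=
        CommGroup.exists_apply_ne_one_of_hasEnoughRootsOfUnity (↥F ≃ₐ[K] ↥F) K hne
      haveI : Finite ↥φ.range := Finite.of_surjective _ φ.rangeRestrict_surjective
      haveI : IsCyclic ↥φ.range := subgroup_units_cyclic _
      have hc : IsCyclic ((↥F ≃ₐ[K] ↥F) ⧸ φ.ker) :=
        isCyclic_of_surjective (QuotientGroup.quotientKerEquivRange φ).symm
          (MulEquiv.surjective _)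
      have h1 := Subgroup.mem_iInf.mp hσ φ.ker
      have h2 := Subgroup.mem_iInf.mp h1 hc
      exact hφ h2
    -- each cyclic piece lies in L
    have hcyc : ∀ H : Subgroup (↥F ≃ₐ[K] ↥F), IsCyclic ((↥F ≃ₐ[K] ↥F) ⧸ H) →
        IntermediateField.fixedField H ≤ L.comap F.val := by
      intro H hH
      haveI : H.Normal := Subgroup.normal_of_comm H
      haveI := hH
      haveI : IsCyclic (↥(IntermediateField.fixedField H) ≃ₐ[K]
          ↥(IntermediateField.fixedField H)) :=
        isCyclic_of_surjective (IsGalois.normalAutEquivQuotient H)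
          (MulEquiv.surjective _)
      have hn : 0 < Module.finrank K ↥(IntermediateField.fixedField H) :=
        Module.finrank_pos
      have hprim : (primitiveRoots (Module.finrank K
          ↥(IntermediateField.fixedField H)) K).Nonempty := by
        obtain ⟨ζ, hζ⟩ := hroots _ hn
        exact ⟨ζ, (mem_primitiveRoots hn).mpr hζ⟩
      obtain ⟨α, ⟨c, hc⟩, hα⟩ :=
        exists_root_adjoin_eq_top_of_isCyclic K ↥(IntermediateField.fixedField H) hprim
      have h2 : IntermediateField.fixedField H
          = IntermediateField.adjoin K {((α : ↥F))} := by
        rw [← IntermediateField.lift_adjoin_simple K _ α, hα, IntermediateField.lift_top]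
      have ha : ((α : ↥F) : Ω) ∈ S := by
        refine ⟨_, hn, ?_⟩
        rw [IntermediateField.mem_bot]
        refine ⟨c, ?_⟩
        calc algebraMap K Ω c = F.val (algebraMap K ↥F c) := (F.val.commutes c).symm
          _ = F.val ((IntermediateField.fixedField H).val
              (algebraMap K ↥(IntermediateField.fixedField H) c)) := by
            rw [(IntermediateField.fixedField H).val.commutes c]
          _ = F.val ((IntermediateField.fixedField H).val
              (α ^ Module.finrank K ↥(IntermediateField.fixedField H))) := by rw [hc]
          _ = ((α : ↥F) : Ω) ^ Module.finrank K ↥(IntermediateField.fixedField H) := by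
            rw [map_pow, map_pow]
            rfl
      intro x hx
      rw [h2] at hx
      have h4 : F.val x ∈ IntermediateField.adjoin K {((α : ↥F) : Ω)} := by
        have h3 : (IntermediateField.adjoin K {((α : ↥F))}).map F.val
            = IntermediateField.adjoin K {((α : ↥F) : Ω)} := by
          rw [IntermediateField.adjoin_map, Set.image_singleton]
          rfl
        exact h3 ▸ ⟨x, hx, rfl⟩
      have h5 : IntermediateField.adjoin K {((α : ↥F) : Ω)} ≤ L :=
        IntermediateField.adjoin_le_iff.mpr
          (Set.singleton_subset_iff.mpr (IntermediateField.subset_adjoin K S ha))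
      exact h5 h4
    -- the cyclic pieces generate everything
    have hbot : IntermediateField.fixedField (⊥ : Subgroup (↥F ≃ₐ[K] ↥F)) = ⊤ := by
      rw [eq_top_iff]
      rintro x _ ⟨g, hg⟩
      rw [Subgroup.mem_bot] at hg
      subst hg
      rfl
    have hsup : (⨆ H ∈ {H : Subgroup (↥F ≃ₐ[K] ↥F) | IsCyclic ((↥F ≃ₐ[K] ↥F) ⧸ H)},
        IntermediateField.fixedField H) = ⊤ := by
      set E := ⨆ H ∈ {H : Subgroup (↥F ≃ₐ[K] ↥F) | IsCyclic ((↥F ≃ₐ[K] ↥F) ⧸ H)},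
        IntermediateField.fixedField H with hE
      have h1 : IntermediateField.fixingSubgroup E = ⊥ := by
        rw [eq_bot_iff, ← hinf]
        refine le_iInf fun H => le_iInf fun hH => ?_
        rw [← IntermediateField.fixingSubgroup_fixedField H]
        intro g hg
        rw [IntermediateField.mem_fixingSubgroup_iff] at hg ⊢
        intro y hy
        exact hg y (le_iSup₂ (f := fun H _ => IntermediateField.fixedField H) H hH hy)
      calc E = IntermediateField.fixedField (IntermediateField.fixingSubgroup E) :=
            (IsGalois.fixedField_fixingSubgroup E).symm
        _ = IntermediateField.fixedField ⊥ := by rw [h1]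
        _ = ⊤ := hbot
    have hle : (⊤ : IntermediateField K ↥F) ≤ L.comap F.val := by
      rw [← hsup]
      exact iSup_le fun H => iSup_le fun hH => hcyc H hH
    intro y hy
    exact hle (IntermediateField.mem_top (x := ⟨y, hy⟩))
end

section
/- Let G be a topologically finitely generated profinite group. Then G admits a fundamental system of open characteristic subgroups: there exist open characteristic subgroups G = D_0 ⊇ D_1 ⊇ D_2 ⊇ ... with ∩_{i≥0} D_i = {1}. -/
/-- A map from a topological group into a discrete space that is constant on left cosets
of an open subgroup is continuous. -/
private lemma continuous_of_const_on_cosets {G X : Type*} [Group G] [TopologicalSpace G]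
    [IsTopologicalGroup G] [TopologicalSpace X] [DiscreteTopology X]
    (N : Subgroup G) (hN : IsOpen (N : Set G)) (f : G → X)
    (hf : ∀ g : G, ∀ m ∈ N, f (g * m) = f g) : Continuous f := by
  rw [continuous_def]
  intro U _
  have key : f ⁻¹' U = ⋃ g ∈ f ⁻¹' U, (fun m => g * m) '' (N : Set G) := by
    ext x
    constructor
    · intro hx
      exact Set.mem_biUnion hx ⟨1, N.one_mem, mul_one x⟩
    · intro h
      simp only [Set.mem_iUnion] at h
      obtain ⟨g, hg, m, hm, rfl⟩ := h
      exact Set.mem_preimage.2 (by rw [hf g m hm]; exact hg)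
  rw [key]
  exact isOpen_biUnion fun g _ => (Homeomorph.mulLeft g).isOpen_image.mpr hN

/-- In a compact group with a dense finitely generated subgroup, there are only finitely
many open subgroups of index at most `n`. -/
private lemma finite_open_subgroups_of_index_le {G : Type*} [Group G] [TopologicalSpace G]
    [IsTopologicalGroup G] [CompactSpace G] {S : Set G} (hSfin : S.Finite)
    (hS : (Subgroup.closure S).topologicalClosure = ⊤) (n : ℕ) :
    {H : Subgroup G | IsOpen (H : Set G) ∧ H.index ≤ n}.Finite := by
  classical
  letI : TopologicalSpace (Equiv.Perm (Fin n)) := ⊥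
  haveI : DiscreteTopology (Equiv.Perm (Fin n)) := ⟨rfl⟩
  haveI := hSfin.to_subtype
  have hdense : Dense ((Subgroup.closure S : Subgroup G) : Set G) := by
    rw [dense_iff_closure_eq, ← Subgroup.topologicalClosure_coe, hS, Subgroup.coe_top]
  rw [← Set.finite_coe_iff]
  set A := {H : Subgroup G | IsOpen (H : Set G) ∧ H.index ≤ n} with hA
  have hfinq : ∀ H : A, Finite (G ⧸ (H : Subgroup G)) := fun H =>
    Subgroup.quotient_finite_of_isOpen _ H.2.1
  let ι : ∀ H : A, (G ⧸ (H : Subgroup G)) ↪ Fin n := fun H =>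
    haveI := hfinq H
    (Finite.equivFin _).toEmbedding.trans
      (Fin.castLEEmb (Subgroup.index_eq_card (H : Subgroup G) ▸ H.2.2))
  let ρ : ∀ H : A, G →* Equiv.Perm (Fin n) := fun H =>
    (Equiv.Perm.viaEmbeddingHom (ι H)).comp (MulAction.toPermHom G (G ⧸ (H : Subgroup G)))
  have hmem : ∀ (H : A) (g : G),
      g ∈ (H : Subgroup G) ↔
        ρ H g (ι H ((1 : G) : G ⧸ (H : Subgroup G))) = ι H ((1 : G) : G ⧸ (H : Subgroup G)) := by
    intro H g
    have h1 : ρ H g (ι H ((1 : G) : G ⧸ (H : Subgroup G)))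
        = ι H (g • ((1 : G) : G ⧸ (H : Subgroup G))) := by
      show (Equiv.Perm.viaEmbeddingHom (ι H)) (MulAction.toPermHom G _ g) _ = _
      rw [Equiv.Perm.viaEmbeddingHom_apply, Equiv.Perm.viaEmbedding_apply]
      rfl
    have h2 : g • ((1 : G) : G ⧸ (H : Subgroup G)) = ((g : G) : G ⧸ (H : Subgroup G)) := by
      rw [MulAction.Quotient.smul_mk, smul_eq_mul, mul_one]
    rw [h1, h2]
    constructor
    · intro hg
      congr 1
      exact QuotientGroup.eq.mpr (by simpa using inv_mem hg)
    · intro hg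
      have h3 := (ι H).injective hg
      have h4 := QuotientGroup.eq.mp h3
      rw [mul_one] at h4
      exact (inv_mem_iff).mp h4
  have hcont : ∀ H : A, Continuous (ρ H) := by
    intro H
    haveI := hfinq H
    haveI : (H : Subgroup G).FiniteIndex := Subgroup.finiteIndex_of_finite_quotient
    have hNopen : IsOpen (((H : Subgroup G).normalCore : Subgroup G) : Set G) :=
      Subgroup.isOpen_of_isClosed_of_finiteIndex _
        (Subgroup.normalCore_isClosed _ (Subgroup.isClosed_of_isOpen _ H.2.1))
    apply continuous_of_const_on_cosets _ hNopen
    intro g m hm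
    have hk : MulAction.toPermHom G (G ⧸ (H : Subgroup G)) m = 1 := by
      rw [← MonoidHom.mem_ker, ← Subgroup.normalCore_eq_ker]
      exact hm
    have hρm : ρ H m = 1 := by
      show (Equiv.Perm.viaEmbeddingHom (ι H)) (MulAction.toPermHom G _ m) = 1
      rw [hk, map_one]
    rw [map_mul, hρm, mul_one]
  have hinj : Function.Injective
      (fun H : A => ((fun s : S => ρ H s), ι H ((1 : G) : G ⧸ (H : Subgroup G)))) := by
    intro H H' heq
    rw [Prod.mk.injEq] at heq
    obtain ⟨heq1, heq2⟩ := heq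
    have hρ : ⇑(ρ H) = ⇑(ρ H') := by
      apply Continuous.ext_on hdense (hcont H) (hcont H')
      exact MonoidHom.eqOn_closure fun x hx => congrFun heq1 ⟨x, hx⟩
    apply Subtype.ext
    ext g
    rw [hmem H g, hmem H' g, hρ, heq2]
  exact Finite.of_injective _ hinj

/-- A topologically finitely generated profinite group admits a fundamental system of
open characteristic subgroups: a descending chain `G = D 0 ⊇ D 1 ⊇ ⋯` of open subgroups,
each preserved by every continuous automorphism of `G`, with trivial intersection. -/
theorem exists_fundamental_system_of_open_characteristic_subgroups
    (G : Type*) [Group G] [TopologicalSpace G] [IsTopologicalGroup G]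
    [CompactSpace G] [TotallyDisconnectedSpace G] [T2Space G]
    (hfg : ∃ S : Set G, S.Finite ∧ (Subgroup.closure S).topologicalClosure = ⊤) :
    ∃ D : ℕ → Subgroup G,
      D 0 = ⊤ ∧
      Antitone D ∧
      (∀ n, IsOpen (D n : Set G)) ∧
      (∀ n, ∀ e : G ≃* G, Continuous e → (D n).map e.toMonoidHom = D n) ∧
      (⨅ n, D n) = ⊥ := by
  obtain ⟨S, hSfin, hS⟩ := hfg
  set A : ℕ → Set (Subgroup G) := fun n => {H : Subgroup G | IsOpen (H : Set G) ∧ H.index ≤ n}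
    with hAdef
  have hAfin : ∀ n, (A n).Finite := finite_open_subgroups_of_index_le hSfin hS
  have hAmono : ∀ {m n : ℕ}, m ≤ n → A m ⊆ A n := by
    intro m n h H hH
    exact ⟨hH.1, le_trans hH.2 h⟩
  refine ⟨fun n => sInf (A n), ?_, ?_, ?_, ?_, ?_⟩
  · show sInf (A 0) = ⊤
    have : A 0 = ∅ := by
      ext H
      simp only [hAdef, Set.mem_setOf_eq, Set.mem_empty_iff_false, iff_false, not_and]
      intro hopen hle
      haveI : Finite (G ⧸ H) := Subgroup.quotient_finite_of_isOpen _ hopen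
      exact Subgroup.index_ne_zero_of_finite (Nat.le_zero.mp hle)
    rw [this, sInf_empty]
  · intro m n h
    exact sInf_le_sInf (hAmono h)
  · intro n
    show IsOpen ((sInf (A n) : Subgroup G) : Set G)
    rw [Subgroup.coe_sInf]
    exact Set.Finite.isOpen_biInter (hAfin n) fun H hH => hH.1
  · intro n e he
    show (sInf (A n)).map e.toMonoidHom = sInf (A n)
    have hbij : Function.Bijective ⇑e := e.bijective
    let φ : G ≃ₜ G := Continuous.homeoOfEquivCompactToT2 (f := e.toEquiv) he
    have hesymm : Continuous ⇑e.symm := φ.symm.continuous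
    have hstable : ∀ (f : G ≃* G), Continuous ⇑f → ∀ H ∈ A n, H.map f.toMonoidHom ∈ A n := by
      intro f hf H hH
      constructor
      · have : ((H.map f.toMonoidHom : Subgroup G) : Set G) = ⇑f '' (H : Set G) := by
          simp [Subgroup.coe_map]
        rw [this]
        let ψ : G ≃ₜ G := Continuous.homeoOfEquivCompactToT2 (f := f.toEquiv) hf
        exact ψ.isOpen_image.mpr hH.1
      · have hker : f.toMonoidHom.ker = ⊥ := (MonoidHom.ker_eq_bot_iff _).mpr f.injective
        rw [Subgroup.index_map_eq _ f.surjective (by rw [hker]; exact bot_le)]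
        exact hH.2
    ext x
    rw [Subgroup.mem_map_equiv, Subgroup.mem_sInf, Subgroup.mem_sInf]
    constructor
    · intro h H hH
      have := h (H.map e.symm.toMonoidHom) (hstable e.symm hesymm H hH)
      rw [Subgroup.mem_map_equiv, MulEquiv.symm_symm] at this
      simpa using this
    · intro h H hH
      have := h (H.map e.toMonoidHom) (hstable e he H hH)
      rwa [Subgroup.mem_map_equiv] at this
  · rw [eq_bot_iff]
    intro x hx
    simp only [Subgroup.mem_iInf, Subgroup.mem_sInf] at hx
    rw [Subgroup.mem_bot]
    by_contra hne
    haveI : TotallySeparatedSpace G := loc_compact_t2_tot_disc_iff_tot_sep.mp inferInstance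
    obtain ⟨W, hWclopen, h1W, hxW⟩ := exists_isClopen_of_totally_separated
      (Ne.symm hne : (1 : G) ≠ x)
    obtain ⟨H, hHW⟩ :=
      IsTopologicalGroup.exist_openNormalSubgroup_sub_clopen_nhds_of_one hWclopen h1W
    have hHopen : IsOpen ((H.toSubgroup : Subgroup G) : Set G) := H.isOpen'
    have hxH : x ∈ (H.toSubgroup : Subgroup G) :=
      hx H.toSubgroup.index H.toSubgroup ⟨hHopen, le_refl _⟩
    exact hxW (hHW hxH)
end
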